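/- Let n ≥ 2 and let ℓ : ℝ → [0,∞) be measurable such that F_ℓ is a set of finite perimeter and finite volume in ℝⁿ. Then for every z̄ ∈ ℝ, the slice of the reduced boundary satisfies, up to ℋ^{n-1}-null sets, (∂*F_ℓ)_{z̄} = B^{n-1}(0, r_ℓ^∨(z̄)) \ B^{n-1}(0, r_ℓ^∧(z̄)), the open annulus in ℝ^{n-1} centred at 0 with radii r_ℓ^∧(z̄) ≤ r_ℓ^∨(z̄). -/

import Mathlib

open MeasureTheory Metric Set Filter
open scoped ENNReal NNReal Topology RealInnerProductSpace symmDiff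

noncomputable section

namespace Schwarz

/-- The point `(z, w) ∈ ℝ × ℝ^m ≅ ℝ^(m+1)`. -/
def mk' {m : ℕ} (z : ℝ) (w : EuclideanSpace ℝ (Fin m)) : EuclideanSpace ℝ (Fin (m + 1)) :=
  (WithLp.equiv 2 (Fin (m + 1) → ℝ)).symm (Fin.cons z ((WithLp.equiv 2 (Fin m → ℝ)) w))

/-- The `w`-component of a point of `ℝ^(m+1) ≅ ℝ × ℝ^m`. -/
def tailv {m : ℕ} (x : EuclideanSpace ℝ (Fin (m + 1))) : EuclideanSpace ℝ (Fin m) :=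
  (WithLp.equiv 2 (Fin m → ℝ)).symm (fun i => x i.succ)

/-- The slice of a subset of `ℝ^(m+1)` at height `z`. -/
def slice {m : ℕ} (A : Set (EuclideanSpace ℝ (Fin (m + 1)))) (z : ℝ) :
    Set (EuclideanSpace ℝ (Fin m)) := {w | mk' z w ∈ A}

/-- `ω_d`, the Lebesgue measure of the unit ball of `ℝ^d`. -/
def ballVol (d : ℕ) : ℝ≥0∞ := volume (ball (0 : EuclideanSpace ℝ (Fin d)) 1)

/-- `A ⊆ ℝ^(m+1)` is `ℓ`-distributed: a.e. slice has measure `ℓ z`. -/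
def IsDistributed (m : ℕ) (ℓ : ℝ → ℝ) (A : Set (EuclideanSpace ℝ (Fin (m + 1)))) : Prop :=
  ∀ᵐ z ∂(volume : Measure ℝ), volume (slice A z) = ENNReal.ofReal (ℓ z)

/-- The radius `r_ℓ(z) = (ℓ z / ω_m)^(1/m)`. -/
def rad (m : ℕ) (ℓ : ℝ → ℝ) (z : ℝ) : ℝ := (ℓ z / (ballVol m).toReal) ^ ((1 : ℝ) / m)

/-- The Schwarz symmetric set `F_ℓ`. -/
def F (m : ℕ) (ℓ : ℝ → ℝ) : Set (EuclideanSpace ℝ (Fin (m + 1))) :=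
  {x | ‖tailv x‖ < rad m ℓ (x 0)}

/-- The density of `A` at `x` equals `s` (balls of volume `ω_d ρ^d`). -/
def DensAt {d : ℕ} (A : Set (EuclideanSpace ℝ (Fin d))) (x : EuclideanSpace ℝ (Fin d))
    (s : ℝ≥0∞) : Prop :=
  Tendsto (fun ρ : ℝ => volume (A ∩ ball x ρ) / (ballVol d * ENNReal.ofReal (ρ ^ d)))
    (𝓝[>] 0) (𝓝 s)

/-- The essential (measure-theoretic) boundary: where the density is neither 0 nor 1.
By Federer's theorem it agrees with the reduced boundary up to `ℋ^(d-1)`-null sets. -/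
def essBoundary {d : ℕ} (A : Set (EuclideanSpace ℝ (Fin d))) :
    Set (EuclideanSpace ℝ (Fin d)) :=
  {x | ¬ DensAt A x 0 ∧ ¬ DensAt A x 1}

/-- Relative perimeter `P(A; G) = ℋ^(d-1)(G ∩ ∂*A)`. -/
def perim {d : ℕ} (A G : Set (EuclideanSpace ℝ (Fin d))) : ℝ≥0∞ :=
  μH[(d : ℝ) - 1] (G ∩ essBoundary A)

/-- A set of finite perimeter (via Federer's criterion). -/
def HasFinPerim {d : ℕ} (A : Set (EuclideanSpace ℝ (Fin d))) : Prop :=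
  MeasurableSet A ∧ perim A univ < ⊤

/-- Translation of a subset of `ℝ^(m+1)` by the horizontal vector `(0, τ)`. -/
def vtrans {m : ℕ} (τ : EuclideanSpace ℝ (Fin m)) (A : Set (EuclideanSpace ℝ (Fin (m + 1)))) :
    Set (EuclideanSpace ℝ (Fin (m + 1))) := (fun x => x + mk' 0 τ) '' A

/-- One-dimensional density of `A ⊆ ℝ` at `x` equals `s`. -/
def DensAtR (A : Set ℝ) (x : ℝ) (s : ℝ≥0∞) : Prop :=
  Tendsto (fun ρ : ℝ => volume (A ∩ ball x ρ) / ENNReal.ofReal (2 * ρ)) (𝓝[>] 0) (𝓝 s)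

/-- Approximate lower limit `g^∧(x)`. -/
def approxLower (g : ℝ → ℝ) (x : ℝ) : EReal :=
  sSup ((fun s : ℝ => (s : EReal)) '' {s : ℝ | DensAtR {y | g y < s} x 0})

/-- Approximate upper limit `g^∨(x)`. -/
def approxUpper (g : ℝ → ℝ) (x : ℝ) : EReal :=
  sInf ((fun s : ℝ => (s : EReal)) '' {s : ℝ | DensAtR {y | s < g y} x 0})

/-- Divergence of a vector field on `ℝ^d`. -/
def divg {d : ℕ} (T : EuclideanSpace ℝ (Fin d) → EuclideanSpace ℝ (Fin d))
    (x : EuclideanSpace ℝ (Fin d)) : ℝ :=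
  ∑ i, fderiv ℝ T x (EuclideanSpace.single i 1) i

/-- `ν` is a measure-theoretic outer unit normal of `A`: the generalised Gauss–Green
formula holds on the (essential = reduced, up to `ℋ^(d-1)`-null sets) boundary. -/
def IsGGNormal {d : ℕ} (A : Set (EuclideanSpace ℝ (Fin d)))
    (ν : EuclideanSpace ℝ (Fin d) → EuclideanSpace ℝ (Fin d)) : Prop :=
  (∀ x ∈ essBoundary A, ‖ν x‖ = 1) ∧
  ∀ T : EuclideanSpace ℝ (Fin d) → EuclideanSpace ℝ (Fin d),
    ContDiff ℝ 1 T → HasCompactSupport T →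
      ∫ x in A, divg T x = ∫ x in essBoundary A, ⟪T x, ν x⟫ ∂(μH[(d : ℝ) - 1])

/-- `g ∈ W^{1,1}(Ω)`: `g` is integrable on `Ω` with integrable distributional derivative. -/
def MemW11 (g : ℝ → ℝ) (Ω : Set ℝ) : Prop :=
  IntegrableOn g Ω ∧ ∃ g' : ℝ → ℝ, IntegrableOn g' Ω ∧
    ∀ φ : ℝ → ℝ, ContDiff ℝ 1 φ → HasCompactSupport φ → tsupport φ ⊆ Ω →
      ∫ z in Ω, g z * deriv φ z = - ∫ z in Ω, g' z * φ z

/-- Rigidity for the perimeter inequality under Schwarz symmetrisation: every equality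
case is a horizontal translate of `F_ℓ`. -/
def Rigidity (m : ℕ) (ℓ : ℝ → ℝ) : Prop :=
  ∀ A : Set (EuclideanSpace ℝ (Fin (m + 1))), MeasurableSet A → IsDistributed m ℓ A →
    perim A univ = perim (F m ℓ) univ →
    ∃ τ : EuclideanSpace ℝ (Fin m), volume (A ∆ vtrans τ (F m ℓ)) = 0

/-- A decomposition `Dℓ = g dx + ε dσ` of the distributional derivative of `ℓ`:
`g = ∇ℓ` is the absolutely continuous density, `σ = |D^s ℓ|` and `ε` the sign of the
singular part. -/
def IsDerivDecomp (ℓ g ε : ℝ → ℝ) (σ : Measure ℝ) : Prop :=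
  Integrable g ∧ σ ⟂ₘ (volume : Measure ℝ) ∧ IsFiniteMeasure σ ∧ (∀ᵐ x ∂σ, |ε x| = 1) ∧
    ∀ φ : ℝ → ℝ, ContDiff ℝ 1 φ → HasCompactSupport φ →
      ∫ x, ℓ x * deriv φ x = -(∫ x, φ x * g x) - ∫ x, φ x * ε x ∂σ

/-- Bounded variation on `ℝ` via the variational definition. -/
def HasBddVariation (g : ℝ → ℝ) : Prop :=
  ∃ C : ℝ, ∀ T : ℝ → ℝ, ContDiff ℝ 1 T → HasCompactSupport T → (∀ x, |T x| ≤ 1) →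
    ∫ x, g x * deriv T x ≤ C



/-! ### Auxiliary lemmas -/

variable {m : ℕ}

@[simp] lemma mk'_apply_zero (z : ℝ) (w : EuclideanSpace ℝ (Fin m)) : mk' z w 0 = z := by
  simp [mk']

@[simp] lemma tailv_mk' (z : ℝ) (w : EuclideanSpace ℝ (Fin m)) : tailv (mk' z w) = w := by
  ext i; simp [mk', tailv]

lemma mk'_eta (x : EuclideanSpace ℝ (Fin (m + 1))) : mk' (x 0) (tailv x) = x := by
  ext i; refine Fin.cases ?_ (fun j => ?_) i <;> simp [mk', tailv]

lemma dist_sq_mk' (z z' : ℝ) (w w' : EuclideanSpace ℝ (Fin m)) :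
    dist (mk' z w) (mk' z' w') ^ 2 = dist z z' ^ 2 + dist w w' ^ 2 := by
  rw [EuclideanSpace.dist_eq, EuclideanSpace.dist_eq]
  rw [Real.sq_sqrt (by positivity), Real.sq_sqrt (by positivity)]
  rw [Fin.sum_univ_succ]
  simp [mk']

lemma dist_fst_le (x y : EuclideanSpace ℝ (Fin (m + 1))) : dist (x 0) (y 0) ≤ dist x y := by
  have h := dist_sq_mk' (x 0) (y 0) (tailv x) (tailv y)
  rw [mk'_eta, mk'_eta] at h
  nlinarith [dist_nonneg (x := x) (y := y), dist_nonneg (x := x 0) (y := y 0),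
    sq_nonneg (dist (tailv x) (tailv y))]

lemma dist_tail_le (x y : EuclideanSpace ℝ (Fin (m + 1))) :
    dist (tailv x) (tailv y) ≤ dist x y := by
  have h := dist_sq_mk' (x 0) (y 0) (tailv x) (tailv y)
  rw [mk'_eta, mk'_eta] at h
  nlinarith [dist_nonneg (x := x) (y := y), dist_nonneg (x := tailv x) (y := tailv y),
    sq_nonneg (dist (x 0) (y 0))]

lemma dist_mk'_le (z z' : ℝ) (w w' : EuclideanSpace ℝ (Fin m)) :
    dist (mk' z w) (mk' z' w') ≤ dist z z' + dist w w' := by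
  have h := dist_sq_mk' z z' w w'
  nlinarith [dist_nonneg (x := mk' z w) (y := mk' z' w'), dist_nonneg (x := z) (y := z'),
    dist_nonneg (x := w) (y := w'), mul_nonneg (dist_nonneg (x := z) (y := z'))
      (dist_nonneg (x := w) (y := w'))]

lemma volume_prodlike (S : Set ℝ) (T : Set (EuclideanSpace ℝ (Fin m)))
    (hS : MeasurableSet S) (hT : MeasurableSet T) :
    volume {x : EuclideanSpace ℝ (Fin (m + 1)) | x 0 ∈ S ∧ tailv x ∈ T} =
      volume S * volume T := by
  have e1 := EuclideanSpace.volume_preserving_symm_measurableEquiv_toLp (Fin (m + 1))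
  have e2 := measurePreserving_piFinSuccAbove (fun _ : Fin (m + 1) => (volume : Measure ℝ)) 0
  have e3 := EuclideanSpace.volume_preserving_symm_measurableEquiv_toLp (Fin m)
  have hT' : MeasurableSet ((MeasurableEquiv.toLp 2 (Fin m → ℝ)).symm.symm ⁻¹' T) :=
    (MeasurableEquiv.toLp 2 (Fin m → ℝ)).symm.symm.measurable hT
  have key : {x : EuclideanSpace ℝ (Fin (m + 1)) | x 0 ∈ S ∧ tailv x ∈ T} =
      (MeasurableEquiv.toLp 2 (Fin (m + 1) → ℝ)).symm ⁻¹'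
        ((MeasurableEquiv.piFinSuccAbove (fun _ : Fin (m + 1) => ℝ) 0) ⁻¹'
          (S ×ˢ ((MeasurableEquiv.toLp 2 (Fin m → ℝ)).symm.symm ⁻¹' T))) := by
    ext x
    simp only [Set.mem_setOf_eq, Set.mem_preimage, MeasurableEquiv.piFinSuccAbove,
      Set.mem_prod]
    constructor
    · rintro ⟨h1, h2⟩
      refine ⟨h1, ?_⟩
      convert h2 using 2
      rfl
    · rintro ⟨h1, h2⟩
      refine ⟨h1, ?_⟩
      convert h2 using 2
      rfl
  have h2m : MeasurableSet ((MeasurableEquiv.piFinSuccAbove (fun _ : Fin (m + 1) => ℝ) 0) ⁻¹'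
      (S ×ˢ ((MeasurableEquiv.toLp 2 (Fin m → ℝ)).symm.symm ⁻¹' T))) :=
    (MeasurableEquiv.piFinSuccAbove (fun _ : Fin (m + 1) => ℝ) 0).measurable (hS.prod hT')
  rw [key]
  rw [e1.measure_preimage h2m.nullMeasurableSet]
  have hvp : (volume : Measure (Fin (m+1) → ℝ)) = Measure.pi (fun _ => volume) := rfl
  rw [hvp, e2.measure_preimage (hS.prod hT').nullMeasurableSet]
  rw [Measure.prod_prod]
  have h3 : (Measure.pi fun _ : Fin m => (volume : Measure ℝ))
      ((MeasurableEquiv.toLp 2 (Fin m → ℝ)).symm.symm ⁻¹' T) = volume T :=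
    (MeasurePreserving.symm _ e3).measure_preimage hT.nullMeasurableSet
  rw [h3]

lemma ballVol_pos (d : ℕ) : 0 < ballVol d := measure_ball_pos _ _ one_pos
lemma ballVol_lt_top (d : ℕ) : ballVol d < ⊤ := measure_ball_lt_top

lemma nontrivialE {d : ℕ} (hd : 1 ≤ d) : Nontrivial (EuclideanSpace ℝ (Fin d)) := by
  refine ⟨⟨EuclideanSpace.single ⟨0, hd⟩ 1, 0, fun h => ?_⟩⟩
  have := congrArg (fun v : EuclideanSpace ℝ (Fin d) => v ⟨0, hd⟩) h
  simp [EuclideanSpace.single_apply] at this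

lemma volume_ball_eq {d : ℕ} (hd : 1 ≤ d) (x : EuclideanSpace ℝ (Fin d)) {ρ : ℝ}
    (hρ : 0 ≤ ρ) : volume (ball x ρ) = ballVol d * ENNReal.ofReal (ρ ^ d) := by
  haveI := nontrivialE hd
  rw [Measure.addHaar_ball volume x hρ, finrank_euclideanSpace_fin, mul_comm]
  rfl

lemma div_mul_div' (a c : ℝ≥0∞) {b d : ℝ≥0∞} (hb0 : b ≠ 0) (hb : b ≠ ⊤) :
    a / b * (c / d) = a * c / (b * d) := by
  rw [div_eq_mul_inv, div_eq_mul_inv, div_eq_mul_inv, ENNReal.mul_inv (Or.inl hb0) (Or.inl hb)]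
  ring

lemma helperA (m : ℕ) (a : ℝ≥0∞) {ρ : ℝ} (hρ : 0 < ρ) :
    a * (ballVol m * ENNReal.ofReal (ρ ^ m)) / (ballVol (m + 1) * ENNReal.ofReal (ρ ^ (m + 1)))
      = (a / ENNReal.ofReal (2 * ρ)) * (ENNReal.ofReal 2 * ballVol m / ballVol (m + 1)) := by
  have hP0 : ENNReal.ofReal (ρ ^ m) ≠ 0 := by
    simp only [ne_eq, ENNReal.ofReal_eq_zero, not_le]; positivity
  rw [div_mul_div' _ _ (by simp only [ne_eq, ENNReal.ofReal_eq_zero, not_le]; linarith)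
    ENNReal.ofReal_ne_top]
  rw [show ρ ^ (m + 1) = ρ ^ m * ρ by ring, ENNReal.ofReal_mul (by positivity),
    ENNReal.ofReal_mul (by norm_num : (0:ℝ) ≤ 2)]
  rw [show a * (ballVol m * (ENNReal.ofReal (ρ ^ m)))
      = (a * ballVol m) * ENNReal.ofReal (ρ ^ m) by ring,
    show ballVol (m + 1) * (ENNReal.ofReal (ρ ^ m) * ENNReal.ofReal ρ)
      = (ballVol (m + 1) * ENNReal.ofReal ρ) * ENNReal.ofReal (ρ ^ m) by ring,
    ENNReal.mul_div_mul_right _ _ hP0 ENNReal.ofReal_ne_top]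
  rw [show a * (ENNReal.ofReal 2 * ballVol m) = (a * ballVol m) * ENNReal.ofReal 2 by ring,
    show ENNReal.ofReal 2 * ENNReal.ofReal ρ * ballVol (m + 1)
      = (ballVol (m + 1) * ENNReal.ofReal ρ) * ENNReal.ofReal 2 by ring,
    ENNReal.mul_div_mul_right _ _ (by norm_num) ENNReal.ofReal_ne_top]

lemma helperB (m : ℕ) (ε : ℝ≥0∞) {ρ : ℝ} (hρ : 0 < ρ) :
    ε * ENNReal.ofReal (2 * ρ) * (ballVol m * ENNReal.ofReal (ρ ^ m))
        / (ballVol (m + 1) * ENNReal.ofReal ((2 * ρ) ^ (m + 1)))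
      = ε * ballVol m / (ballVol (m + 1) * ENNReal.ofReal (2 ^ m)) := by
  have h1 : ((2:ℝ) * ρ) ^ (m + 1) = (2 * ρ) * (2 ^ m * ρ ^ m) := by ring
  rw [h1, show ENNReal.ofReal (2 * ρ * (2 ^ m * ρ ^ m))
      = ENNReal.ofReal (2 * ρ) * (ENNReal.ofReal (2 ^ m) * ENNReal.ofReal (ρ ^ m)) by
    rw [ENNReal.ofReal_mul (by linarith), ENNReal.ofReal_mul (by positivity)]
    rw [ENNReal.ofReal_mul (by positivity)]]
  rw [show ε * ENNReal.ofReal (2 * ρ) * (ballVol m * ENNReal.ofReal (ρ ^ m))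
      = (ε * ballVol m) * (ENNReal.ofReal (2 * ρ) * ENNReal.ofReal (ρ ^ m)) by ring,
    show ballVol (m + 1) * (ENNReal.ofReal (2 * ρ) * (ENNReal.ofReal (2 ^ m)
        * ENNReal.ofReal (ρ ^ m)))
      = (ballVol (m + 1) * ENNReal.ofReal (2 ^ m))
        * (ENNReal.ofReal (2 * ρ) * ENNReal.ofReal (ρ ^ m)) by ring,
    ENNReal.mul_div_mul_right]
  · refine mul_ne_zero ?_ ?_ <;> simp only [ne_eq, ENNReal.ofReal_eq_zero, not_le] <;> positivity
  · exact ENNReal.mul_ne_top ENNReal.ofReal_ne_top ENNReal.ofReal_ne_top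

lemma measurable_rad (m : ℕ) {ℓ : ℝ → ℝ} (hmeas : Measurable ℓ) : Measurable (rad m ℓ) :=
  (Real.continuous_rpow_const (by positivity)).measurable.comp
    (hmeas.div_const ((ballVol m).toReal))

lemma mem_F_iff {ℓ : ℝ → ℝ} (x : EuclideanSpace ℝ (Fin (m + 1))) :
    x ∈ F m ℓ ↔ ‖tailv x‖ < rad m ℓ (x 0) := Iff.rfl

lemma norm_le_of_dist {w' w : EuclideanSpace ℝ (Fin m)} :
    ‖w'‖ ≤ ‖w‖ + dist w' w := by
  have h := dist_triangle w' w 0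
  rw [dist_zero_right, dist_zero_right] at h
  linarith

section Incl

variable {ℓ : ℝ → ℝ} {zb s : ℝ} {w : EuclideanSpace ℝ (Fin m)}

lemma ball_diff_subset (hws : ‖w‖ < s) {ρ : ℝ} (hρs : ρ ≤ s - ‖w‖) :
    ball (mk' zb w) ρ \ F m ℓ ⊆
      {x | x 0 ∈ {z | rad m ℓ z < s} ∩ ball zb ρ ∧ tailv x ∈ ball w ρ} := by
  rintro x ⟨hxB, hxF⟩
  rw [mem_ball] at hxB
  have h0 : dist (x 0) zb < ρ := lt_of_le_of_lt (by simpa using dist_fst_le x (mk' zb w)) hxB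
  have ht : dist (tailv x) w < ρ := lt_of_le_of_lt (by simpa using dist_tail_le x (mk' zb w)) hxB
  have hr : rad m ℓ (x 0) ≤ ‖tailv x‖ := not_lt.mp hxF
  have hn : ‖tailv x‖ ≤ ‖w‖ + dist (tailv x) w := norm_le_of_dist
  exact ⟨⟨by simp only [Set.mem_setOf_eq]; linarith, mem_ball.mpr h0⟩, mem_ball.mpr ht⟩

lemma ball_inter_subset (hsw : s < ‖w‖) {ρ : ℝ} (hρs : ρ ≤ ‖w‖ - s) :
    F m ℓ ∩ ball (mk' zb w) ρ ⊆
      {x | x 0 ∈ {z | s < rad m ℓ z} ∩ ball zb ρ ∧ tailv x ∈ ball w ρ} := by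
  rintro x ⟨hxF, hxB⟩
  rw [mem_ball] at hxB
  have h0 : dist (x 0) zb < ρ := lt_of_le_of_lt (by simpa using dist_fst_le x (mk' zb w)) hxB
  have ht : dist (tailv x) w < ρ := lt_of_le_of_lt (by simpa using dist_tail_le x (mk' zb w)) hxB
  have hr : ‖tailv x‖ < rad m ℓ (x 0) := hxF
  have hn : ‖w‖ ≤ ‖tailv x‖ + dist (tailv x) w := by
    have := norm_le_of_dist (w' := w) (w := tailv x)
    rwa [dist_comm] at this
  exact ⟨⟨by simp only [Set.mem_setOf_eq]; linarith, mem_ball.mpr h0⟩, mem_ball.mpr ht⟩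

lemma chunk_subset_diff (hsw : s < ‖w‖) {ρ : ℝ} (hρs : ρ ≤ ‖w‖ - s) :
    {x | x 0 ∈ {z | rad m ℓ z < s} ∩ ball zb ρ ∧ tailv x ∈ ball w ρ}
      ⊆ ball (mk' zb w) (2 * ρ) \ F m ℓ := by
  rintro x ⟨⟨hzr, hzb⟩, hwt⟩
  have hzb' := mem_ball.mp hzb
  have hwt' := mem_ball.mp hwt
  have hr : rad m ℓ (x 0) < s := hzr
  constructor
  · rw [mem_ball]
    calc dist x (mk' zb w) = dist (mk' (x 0) (tailv x)) (mk' zb w) := by rw [mk'_eta]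
      _ ≤ dist (x 0) zb + dist (tailv x) w := dist_mk'_le _ _ _ _
      _ < 2 * ρ := by linarith
  · intro hxF
    have hn : ‖w‖ ≤ ‖tailv x‖ + dist (tailv x) w := by
      have := norm_le_of_dist (w' := w) (w := tailv x)
      rwa [dist_comm] at this
    have : ‖tailv x‖ < rad m ℓ (x 0) := hxF
    linarith

lemma chunk_subset_inter (hws : ‖w‖ < s) {ρ : ℝ} (hρs : ρ ≤ s - ‖w‖) :
    {x | x 0 ∈ {z | s < rad m ℓ z} ∩ ball zb ρ ∧ tailv x ∈ ball w ρ}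
      ⊆ F m ℓ ∩ ball (mk' zb w) (2 * ρ) := by
  rintro x ⟨⟨hzr, hzb⟩, hwt⟩
  have hzb' := mem_ball.mp hzb
  have hwt' := mem_ball.mp hwt
  have hr : s < rad m ℓ (x 0) := hzr
  have hn : ‖tailv x‖ ≤ ‖w‖ + dist (tailv x) w := norm_le_of_dist
  constructor
  · exact show ‖tailv x‖ < rad m ℓ (x 0) by linarith
  · rw [mem_ball]
    calc dist x (mk' zb w) = dist (mk' (x 0) (tailv x)) (mk' zb w) := by rw [mk'_eta]
      _ ≤ dist (x 0) zb + dist (tailv x) w := dist_mk'_le _ _ _ _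
      _ < 2 * ρ := by linarith

end Incl

section Dens

variable {ℓ : ℝ → ℝ} {zb s : ℝ} {w : EuclideanSpace ℝ (Fin m)}

lemma denom_ne_zero {ρ : ℝ} (hρ : 0 < ρ) :
    ballVol (m + 1) * ENNReal.ofReal (ρ ^ (m + 1)) ≠ 0 := by
  refine mul_ne_zero (ballVol_pos _).ne' ?_
  simp only [ne_eq, ENNReal.ofReal_eq_zero, not_le]
  positivity

lemma denom_ne_top (ρ : ℝ) :
    ballVol (m + 1) * ENNReal.ofReal (ρ ^ (m + 1)) ≠ ⊤ :=
  ENNReal.mul_ne_top (ballVol_lt_top _).ne ENNReal.ofReal_ne_top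

lemma densQuot_eq (hF : MeasurableSet (F m ℓ)) (xb : EuclideanSpace ℝ (Fin (m + 1)))
    {ρ : ℝ} (hρ : 0 < ρ) :
    volume (F m ℓ ∩ ball xb ρ) / (ballVol (m + 1) * ENNReal.ofReal (ρ ^ (m + 1)))
      = 1 - volume (ball xb ρ \ F m ℓ) / (ballVol (m + 1) * ENNReal.ofReal (ρ ^ (m + 1))) := by
  have hD : volume (ball xb ρ) = ballVol (m + 1) * ENNReal.ofReal (ρ ^ (m + 1)) :=
    volume_ball_eq (by omega) xb hρ.le
  have hsplit : volume (ball xb ρ ∩ F m ℓ) + volume (ball xb ρ \ F m ℓ) = volume (ball xb ρ) :=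
    measure_inter_add_diff _ hF
  have hfin : volume (ball xb ρ \ F m ℓ) ≠ ⊤ :=
    (lt_of_le_of_lt (measure_mono diff_subset) measure_ball_lt_top).ne
  have h1 : volume (ball xb ρ ∩ F m ℓ) = volume (ball xb ρ) - volume (ball xb ρ \ F m ℓ) := by
    rw [← hsplit, ENNReal.add_sub_cancel_right hfin]
  rw [Set.inter_comm, h1, hD, ENNReal.sub_div (fun _ _ => denom_ne_zero hρ),
    ENNReal.div_self (denom_ne_zero hρ) (denom_ne_top ρ)]

lemma densAt_one (hm : 1 ≤ m) (hmeas : Measurable ℓ) (hF : MeasurableSet (F m ℓ))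
    (hws : ‖w‖ < s) (hs : DensAtR {z | rad m ℓ z < s} zb 0) :
    DensAt (F m ℓ) (mk' zb w) 1 := by
  have hZ : MeasurableSet {z | rad m ℓ z < s} :=
    measurableSet_lt (measurable_rad m hmeas) measurable_const
  set xb := mk' zb w with hxb
  set κ := ENNReal.ofReal 2 * ballVol m / ballVol (m + 1) with hκ
  have hκtop : κ ≠ ⊤ :=
    (ENNReal.div_lt_top (ENNReal.mul_ne_top ENNReal.ofReal_ne_top (ballVol_lt_top m).ne)
      (ballVol_pos (m + 1)).ne').ne
  have hg : Tendsto (fun ρ : ℝ => volume (ball xb ρ \ F m ℓ)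
      / (ballVol (m + 1) * ENNReal.ofReal (ρ ^ (m + 1)))) (𝓝[>] 0) (𝓝 0) := by
    have hub : Tendsto (fun ρ : ℝ =>
        (volume ({z | rad m ℓ z < s} ∩ ball zb ρ) / ENNReal.ofReal (2 * ρ)) * κ)
        (𝓝[>] 0) (𝓝 0) := by
      have := ENNReal.Tendsto.mul_const hs (Or.inr hκtop)
      simpa using this
    refine tendsto_of_tendsto_of_tendsto_of_le_of_le' tendsto_const_nhds hub
      (Eventually.of_forall fun ρ => zero_le) ?_
    filter_upwards [Ioo_mem_nhdsGT_of_mem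
        (Set.mem_Ico.mpr ⟨le_refl (0:ℝ), (by linarith : (0:ℝ) < s - ‖w‖)⟩)]
      with ρ hρ
    obtain ⟨hρ0, hρs⟩ := hρ
    have hb : volume (ball xb ρ \ F m ℓ)
        ≤ volume ({z | rad m ℓ z < s} ∩ ball zb ρ) * (ballVol m * ENNReal.ofReal (ρ ^ m)) := by
      refine le_trans (measure_mono (ball_diff_subset hws hρs.le)) ?_
      rw [volume_prodlike _ _ (hZ.inter measurableSet_ball) measurableSet_ball,
        volume_ball_eq hm w hρ0.le]
    calc volume (ball xb ρ \ F m ℓ) / (ballVol (m + 1) * ENNReal.ofReal (ρ ^ (m + 1)))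
        ≤ volume ({z | rad m ℓ z < s} ∩ ball zb ρ) * (ballVol m * ENNReal.ofReal (ρ ^ m))
          / (ballVol (m + 1) * ENNReal.ofReal (ρ ^ (m + 1))) := ENNReal.div_le_div_right hb _
      _ = _ := helperA m _ hρ0
  have hc : Tendsto (fun t : ℝ≥0∞ => 1 - t) (𝓝 0) (𝓝 1) := by
    have := (ENNReal.continuous_sub_left ENNReal.one_ne_top).tendsto 0
    simpa using this
  refine Tendsto.congr' ?_ (hc.comp hg)
  filter_upwards [self_mem_nhdsWithin] with ρ hρ0
  exact (densQuot_eq hF xb hρ0).symm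

lemma densAt_zero (hm : 1 ≤ m) (hmeas : Measurable ℓ) (hF : MeasurableSet (F m ℓ))
    (hsw : s < ‖w‖) (hs : DensAtR {z | s < rad m ℓ z} zb 0) :
    DensAt (F m ℓ) (mk' zb w) 0 := by
  have hZ : MeasurableSet {z | s < rad m ℓ z} :=
    measurableSet_lt measurable_const (measurable_rad m hmeas)
  set xb := mk' zb w with hxb
  set κ := ENNReal.ofReal 2 * ballVol m / ballVol (m + 1) with hκ
  have hκtop : κ ≠ ⊤ :=
    (ENNReal.div_lt_top (ENNReal.mul_ne_top ENNReal.ofReal_ne_top (ballVol_lt_top m).ne)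
      (ballVol_pos (m + 1)).ne').ne
  have hub : Tendsto (fun ρ : ℝ =>
      (volume ({z | s < rad m ℓ z} ∩ ball zb ρ) / ENNReal.ofReal (2 * ρ)) * κ)
      (𝓝[>] 0) (𝓝 0) := by
    have := ENNReal.Tendsto.mul_const hs (Or.inr hκtop)
    simpa using this
  refine tendsto_of_tendsto_of_tendsto_of_le_of_le' tendsto_const_nhds hub
    (Eventually.of_forall fun ρ => zero_le) ?_
  filter_upwards [Ioo_mem_nhdsGT_of_mem
      (Set.mem_Ico.mpr ⟨le_refl (0:ℝ), (by linarith : (0:ℝ) < ‖w‖ - s)⟩)]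
    with ρ hρ
  obtain ⟨hρ0, hρs⟩ := hρ
  have hb : volume (F m ℓ ∩ ball xb ρ)
      ≤ volume ({z | s < rad m ℓ z} ∩ ball zb ρ) * (ballVol m * ENNReal.ofReal (ρ ^ m)) := by
    refine le_trans (measure_mono (ball_inter_subset hsw hρs.le)) ?_
    rw [volume_prodlike _ _ (hZ.inter measurableSet_ball) measurableSet_ball,
      volume_ball_eq hm w hρ0.le]
  calc volume (F m ℓ ∩ ball xb ρ) / (ballVol (m + 1) * ENNReal.ofReal (ρ ^ (m + 1)))
      ≤ volume ({z | s < rad m ℓ z} ∩ ball zb ρ) * (ballVol m * ENNReal.ofReal (ρ ^ m))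
        / (ballVol (m + 1) * ENNReal.ofReal (ρ ^ (m + 1))) := ENNReal.div_le_div_right hb _
    _ = _ := helperA m _ hρ0

lemma tendsto_two_mul : Tendsto (fun ρ : ℝ => 2 * ρ) (𝓝[>] 0) (𝓝[>] 0) := by
  refine tendsto_nhdsWithin_of_tendsto_nhds_of_eventually_within _ ?_ ?_
  · have : Tendsto (fun ρ : ℝ => 2 * ρ) (𝓝 0) (𝓝 (2 * 0)) :=
      (continuous_const.mul continuous_id).tendsto 0
    simpa using this.mono_left nhdsWithin_le_nhds
  · filter_upwards [self_mem_nhdsWithin] with ρ (hρ : ρ ∈ Ioi (0:ℝ))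
    exact mul_pos two_pos (Set.mem_Ioi.mp hρ)

lemma freq_of_not_densAtR {Z : Set ℝ} (hns : ¬ DensAtR Z zb 0) :
    ∃ ε : ℝ≥0∞, 0 < ε ∧
      ∃ᶠ ρ in 𝓝[>] (0:ℝ), ε * ENNReal.ofReal (2 * ρ) ≤ volume (Z ∩ ball zb ρ) := by
  rw [DensAtR, ENNReal.tendsto_nhds_zero] at hns
  push_neg at hns
  obtain ⟨ε, hε, hfreq⟩ := hns
  refine ⟨ε, hε, ?_⟩
  refine (hfreq.and_eventually self_mem_nhdsWithin).mono ?_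
  rintro ρ ⟨h1, (h2 : ρ ∈ Ioi (0:ℝ))⟩
  have h2ρ : ENNReal.ofReal (2 * ρ) ≠ 0 := by
    simp only [ne_eq, ENNReal.ofReal_eq_zero, not_le]
    have : (0:ℝ) < ρ := h2
    linarith
  exact (ENNReal.le_div_iff_mul_le (Or.inl h2ρ) (Or.inl ENNReal.ofReal_ne_top)).mp h1.le

lemma delta_pos {ε : ℝ≥0∞} (hε : 0 < ε) :
    0 < ε * ballVol m / (ballVol (m + 1) * ENNReal.ofReal (2 ^ m)) :=
  ENNReal.div_pos (mul_ne_zero hε.ne' (ballVol_pos m).ne')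
    (ENNReal.mul_ne_top (ballVol_lt_top _).ne ENNReal.ofReal_ne_top)

lemma not_densAt_one (hm : 1 ≤ m) (hmeas : Measurable ℓ) (hF : MeasurableSet (F m ℓ))
    (hsw : s < ‖w‖) (hns : ¬ DensAtR {z | rad m ℓ z < s} zb 0) :
    ¬ DensAt (F m ℓ) (mk' zb w) 1 := by
  have hZ : MeasurableSet {z | rad m ℓ z < s} :=
    measurableSet_lt (measurable_rad m hmeas) measurable_const
  set xb := mk' zb w with hxb
  obtain ⟨ε, hε, hfreq⟩ := freq_of_not_densAtR hns
  set δ := ε * ballVol m / (ballVol (m + 1) * ENNReal.ofReal (2 ^ m)) with hδ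
  have hδ0 : δ ≠ 0 := (delta_pos hε).ne'
  have key : ∃ᶠ ρ in 𝓝[>] (0:ℝ), volume (F m ℓ ∩ ball xb ρ)
      / (ballVol (m + 1) * ENNReal.ofReal (ρ ^ (m + 1))) ≤ 1 - δ := by
    refine tendsto_two_mul.frequently ?_
    refine ((hfreq.and_eventually (Ioo_mem_nhdsGT_of_mem
      (Set.mem_Ico.mpr ⟨le_refl (0:ℝ), (by linarith : (0:ℝ) < ‖w‖ - s)⟩))).mono ?_)
    rintro ρ ⟨h1, hρ0, hρs⟩
    have hchunk : volume ({x : EuclideanSpace ℝ (Fin (m+1)) |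
        x 0 ∈ {z | rad m ℓ z < s} ∩ ball zb ρ ∧ tailv x ∈ ball w ρ})
        = volume ({z | rad m ℓ z < s} ∩ ball zb ρ) * (ballVol m * ENNReal.ofReal (ρ ^ m)) := by
      rw [volume_prodlike _ _ (hZ.inter measurableSet_ball) measurableSet_ball,
        volume_ball_eq hm w hρ0.le]
    have hE : ε * ENNReal.ofReal (2 * ρ) * (ballVol m * ENNReal.ofReal (ρ ^ m))
        ≤ volume (ball xb (2 * ρ) \ F m ℓ) := by
      refine le_trans ?_ (measure_mono (chunk_subset_diff hsw hρs.le))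
      rw [hchunk]
      exact mul_le_mul_left h1 _
    have hdiv : δ ≤ volume (ball xb (2 * ρ) \ F m ℓ)
        / (ballVol (m + 1) * ENNReal.ofReal ((2 * ρ) ^ (m + 1))) := by
      rw [hδ, ← helperB m ε hρ0]
      exact ENNReal.div_le_div_right hE _
    rw [densQuot_eq hF xb (by linarith : (0:ℝ) < 2 * ρ)]
    exact tsub_le_tsub_left hdiv 1
  intro hT
  have hlt : 1 - δ < 1 := ENNReal.sub_lt_self ENNReal.one_ne_top one_ne_zero hδ0
  have hev : ∀ᶠ ρ in 𝓝[>] (0:ℝ), 1 - δ < volume (F m ℓ ∩ ball xb ρ)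
      / (ballVol (m + 1) * ENNReal.ofReal (ρ ^ (m + 1))) :=
    hT (isOpen_Ioi.mem_nhds hlt)
  obtain ⟨ρ, h1, h2⟩ := (key.and_eventually hev).exists
  exact absurd h2 (not_lt.mpr h1)

lemma not_densAt_zero (hm : 1 ≤ m) (hmeas : Measurable ℓ) (hF : MeasurableSet (F m ℓ))
    (hws : ‖w‖ < s) (hns : ¬ DensAtR {z | s < rad m ℓ z} zb 0) :
    ¬ DensAt (F m ℓ) (mk' zb w) 0 := by
  have hZ : MeasurableSet {z | s < rad m ℓ z} :=
    measurableSet_lt measurable_const (measurable_rad m hmeas)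
  set xb := mk' zb w with hxb
  obtain ⟨ε, hε, hfreq⟩ := freq_of_not_densAtR hns
  set δ := ε * ballVol m / (ballVol (m + 1) * ENNReal.ofReal (2 ^ m)) with hδ
  have hδ0 : δ ≠ 0 := (delta_pos hε).ne'
  have key : ∃ᶠ ρ in 𝓝[>] (0:ℝ), δ ≤ volume (F m ℓ ∩ ball xb ρ)
      / (ballVol (m + 1) * ENNReal.ofReal (ρ ^ (m + 1))) := by
    refine tendsto_two_mul.frequently ?_
    refine ((hfreq.and_eventually (Ioo_mem_nhdsGT_of_mem
      (Set.mem_Ico.mpr ⟨le_refl (0:ℝ), (by linarith : (0:ℝ) < s - ‖w‖)⟩))).mono ?_)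
    rintro ρ ⟨h1, hρ0, hρs⟩
    have hchunk : volume ({x : EuclideanSpace ℝ (Fin (m+1)) |
        x 0 ∈ {z | s < rad m ℓ z} ∩ ball zb ρ ∧ tailv x ∈ ball w ρ})
        = volume ({z | s < rad m ℓ z} ∩ ball zb ρ) * (ballVol m * ENNReal.ofReal (ρ ^ m)) := by
      rw [volume_prodlike _ _ (hZ.inter measurableSet_ball) measurableSet_ball,
        volume_ball_eq hm w hρ0.le]
    have hE : ε * ENNReal.ofReal (2 * ρ) * (ballVol m * ENNReal.ofReal (ρ ^ m))
        ≤ volume (F m ℓ ∩ ball xb (2 * ρ)) := by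
      refine le_trans ?_ (measure_mono (chunk_subset_inter hws hρs.le))
      rw [hchunk]
      exact mul_le_mul_left h1 _
    rw [hδ, ← helperB m ε hρ0]
    exact ENNReal.div_le_div_right hE _
  intro hT
  have hev : ∀ᶠ ρ in 𝓝[>] (0:ℝ), volume (F m ℓ ∩ ball xb ρ)
      / (ballVol (m + 1) * ENNReal.ofReal (ρ ^ (m + 1))) < δ :=
    hT (isOpen_Iio.mem_nhds (pos_iff_ne_zero.mp (delta_pos hε)).bot_lt)
  obtain ⟨ρ, h1, h2⟩ := (key.and_eventually hev).exists
  exact absurd h2 (not_lt.mpr h1)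

end Dens

section Extract

variable {g : ℝ → ℝ} {zb c : ℝ}

lemma exists_lt_of_lt_approxLower (h : (c : EReal) < approxLower g zb) :
    ∃ s : ℝ, DensAtR {y | g y < s} zb 0 ∧ c < s := by
  rw [approxLower, lt_sSup_iff] at h
  obtain ⟨_, ⟨s, hs, rfl⟩, hcs⟩ := h
  exact ⟨s, hs, by simpa using (EReal.coe_lt_coe_iff.mp (by simpa using hcs))⟩

lemma exists_lt_of_approxUpper_lt (h : approxUpper g zb < (c : EReal)) :
    ∃ s : ℝ, DensAtR {y | s < g y} zb 0 ∧ s < c := by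
  rw [approxUpper, sInf_lt_iff] at h
  obtain ⟨_, ⟨s, hs, rfl⟩, hcs⟩ := h
  exact ⟨s, hs, by simpa using (EReal.coe_lt_coe_iff.mp (by simpa using hcs))⟩

lemma exists_not_of_approxLower_lt (h : approxLower g zb < (c : EReal)) :
    ∃ s : ℝ, ¬ DensAtR {y | g y < s} zb 0 ∧ s < c := by
  obtain ⟨s, h1, h2⟩ := EReal.exists_between_coe_real h
  refine ⟨s, fun hd => ?_, by exact_mod_cast h2⟩
  have hle : (s : EReal) ≤ approxLower g zb := le_sSup (Set.mem_image_of_mem _ hd)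
  exact absurd h1 (not_lt.mpr hle)

lemma exists_not_of_lt_approxUpper (h : (c : EReal) < approxUpper g zb) :
    ∃ s : ℝ, ¬ DensAtR {y | s < g y} zb 0 ∧ c < s := by
  obtain ⟨s, h1, h2⟩ := EReal.exists_between_coe_real h
  refine ⟨s, fun hd => ?_, by exact_mod_cast h1⟩
  have hle : approxUpper g zb ≤ (s : EReal) := sInf_le (Set.mem_image_of_mem _ hd)
  exact absurd h2 (not_lt.mpr hle)

end Extract

lemma norm_eq_null (hm : 1 ≤ m) (e : EReal) :
    volume {w : EuclideanSpace ℝ (Fin m) | ((‖w‖ : ℝ) : EReal) = e} = 0 := by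
  haveI := nontrivialE hm
  induction e using EReal.rec with
  | bot =>
      convert measure_empty (μ := (volume : Measure (EuclideanSpace ℝ (Fin m))))
      ext w; simp
  | coe c =>
      have hset : {w : EuclideanSpace ℝ (Fin m) | ((‖w‖ : ℝ) : EReal) = (c : EReal)}
          = sphere 0 c := by
        ext w
        simp only [Set.mem_setOf_eq, EReal.coe_eq_coe_iff, mem_sphere_iff_norm, sub_zero]
      rw [hset]
      exact Measure.addHaar_sphere volume 0 c
  | top =>
      convert measure_empty (μ := (volume : Measure (EuclideanSpace ℝ (Fin m))))
      ext w; simp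

lemma hausdorff_null {d : ℕ} {S : Set (EuclideanSpace ℝ (Fin d))} (hS : volume S = 0) :
    μH[(d : ℝ)] S = 0 := by
  refine le_antisymm ?_ zero_le
  have hlip : LipschitzWith ((Fintype.card (Fin d) : ℝ≥0) ^ ((1 : ℝ≥0∞) / 2).toReal)
      ((WithLp.equiv 2 (Fin d → ℝ)).symm) := by
    intro x y
    have h := PiLp.antilipschitzWith_ofLp 2 (fun _ : Fin d => ℝ)
      ((WithLp.equiv 2 (Fin d → ℝ)).symm x) ((WithLp.equiv 2 (Fin d → ℝ)).symm y)
    simpa using h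
  set T := (WithLp.equiv 2 (Fin d → ℝ)) '' S with hT
  have hST : S = (WithLp.equiv 2 (Fin d → ℝ)).symm '' T := by
    rw [hT, Equiv.symm_image_image]
  have hTnull : (volume : Measure (Fin d → ℝ)) T = 0 := by
    have e3 := EuclideanSpace.volume_preserving_symm_measurableEquiv_toLp (Fin d)
    have himg : T = (MeasurableEquiv.toLp 2 (Fin d → ℝ)).symm.symm ⁻¹' S := by
      rw [hT, Equiv.image_eq_preimage_symm]
      rfl
    rw [himg, (MeasurePreserving.symm _ e3).measure_preimage
      (MeasureTheory.NullMeasurableSet.of_null hS)]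
    exact hS
  have hμT : μH[(d : ℝ)] T = 0 := by
    have hpi : (μH[(d : ℝ)] : Measure (Fin d → ℝ)) = volume := by
      have := MeasureTheory.hausdorffMeasure_pi_real (ι := Fin d)
      simpa using this
    rw [hpi]
    exact hTnull
  calc μH[(d : ℝ)] S
      ≤ (((Fintype.card (Fin d) : ℝ≥0) ^ ((1 : ℝ≥0∞) / 2).toReal : ℝ≥0) : ℝ≥0∞) ^ (d : ℝ)
        * μH[(d : ℝ)] T := by
        rw [hST]
        exact hlip.hausdorffMeasure_image_le (Nat.cast_nonneg d) T
    _ = 0 := by rw [hμT, mul_zero]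

lemma densAt_unique {d : ℕ} {A : Set (EuclideanSpace ℝ (Fin d))}
    {x : EuclideanSpace ℝ (Fin d)} (h0 : DensAt A x 0) (h1 : DensAt A x 1) : False := by
  have := tendsto_nhds_unique h0 h1
  exact zero_ne_one this

/-- the slice of `∂*F_ℓ` at `zb` is the annulus with radii
`r_ℓ^∧(zb) ≤ r_ℓ^∨(zb)`. -/
theorem sliceBoundary_eq_annulus (m : ℕ) (hm : 1 ≤ m)
    (ℓ : ℝ → ℝ) (hmeas : Measurable ℓ) (hpos : ∀ z, 0 ≤ ℓ z)
    (hper : HasFinPerim (F m ℓ)) (hvol : volume (F m ℓ) < ⊤) (zb : ℝ) :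
    μH[(m : ℝ)] (slice (essBoundary (F m ℓ)) zb ∆
      {w : EuclideanSpace ℝ (Fin m) |
        approxLower (rad m ℓ) zb ≤ ((‖w‖ : ℝ) : EReal) ∧
        ((‖w‖ : ℝ) : EReal) < approxUpper (rad m ℓ) zb}) = 0 := by
  classical
  have hF : MeasurableSet (F m ℓ) := hper.1
  set a := approxLower (rad m ℓ) zb with ha
  set b := approxUpper (rad m ℓ) zb with hb
  have hsub : slice (essBoundary (F m ℓ)) zb ∆
      {w : EuclideanSpace ℝ (Fin m) | a ≤ ((‖w‖ : ℝ) : EReal) ∧ ((‖w‖ : ℝ) : EReal) < b}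
      ⊆ {w : EuclideanSpace ℝ (Fin m) | ((‖w‖ : ℝ) : EReal) = a}
        ∪ {w : EuclideanSpace ℝ (Fin m) | ((‖w‖ : ℝ) : EReal) = b} := by
    intro w hw
    rw [Set.mem_symmDiff] at hw
    rcases hw with ⟨hw1, hw2⟩ | ⟨hw1, hw2⟩
    · -- in the slice of the essential boundary but not in the annulus
      obtain ⟨hn0, hn1⟩ := (hw1 : mk' zb w ∈ essBoundary (F m ℓ))
      by_contra hcon
      rw [Set.mem_union] at hcon
      push_neg at hcon
      obtain ⟨hca, hcb⟩ := hcon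
      rcases not_and_or.mp hw2 with h | h
      · rw [not_le] at h
        obtain ⟨s, hs, hws⟩ := exists_lt_of_lt_approxLower h
        exact hn1 (densAt_one hm hmeas hF hws hs)
      · rw [not_lt] at h
        have h' : b < ((‖w‖ : ℝ) : EReal) := lt_of_le_of_ne h (fun he => hcb he.symm)
        obtain ⟨s, hs, hsw⟩ := exists_lt_of_approxUpper_lt h'
        exact hn0 (densAt_zero hm hmeas hF hsw hs)
    · -- in the annulus but not in the slice
      obtain ⟨haw, hwb⟩ := hw1
      have hnb : ¬ (mk' zb w ∈ essBoundary (F m ℓ)) := hw2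
      rw [essBoundary, Set.mem_setOf_eq, not_and_or, not_not, not_not] at hnb
      by_contra hcon
      rw [Set.mem_union] at hcon
      push_neg at hcon
      obtain ⟨hca, hcb⟩ := hcon
      rcases hnb with h0 | h1
      · obtain ⟨s, hs, hws⟩ := exists_not_of_lt_approxUpper hwb
        exact (not_densAt_zero hm hmeas hF hws hs) h0
      · have haw' : a < ((‖w‖ : ℝ) : EReal) := lt_of_le_of_ne haw (fun he => hca he.symm)
        obtain ⟨s, hs, hsw⟩ := exists_not_of_approxLower_lt haw'
        exact (not_densAt_one hm hmeas hF hsw hs) h1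
  have hnull : volume ({w : EuclideanSpace ℝ (Fin m) | ((‖w‖ : ℝ) : EReal) = a}
      ∪ {w : EuclideanSpace ℝ (Fin m) | ((‖w‖ : ℝ) : EReal) = b}) = 0 :=
    measure_union_null (norm_eq_null hm a) (norm_eq_null hm b)
  refine le_antisymm (le_trans (measure_mono hsub) ?_) zero_le
  rw [hausdorff_null hnull]

end Schwarz
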